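/- arXiv:1710.07979 — 5 statements merged into one kernel-verified Lean document; each statement's English description precedes it below -/
import Mathlib

section
/- Let E be a complex inner product space, n a natural number, f : Fin n → E a family of vectors with ‖f i‖ = 1 for all i, and α : Fin n → ℂ with ∑_i ‖α i‖² = 1. If ‖∑_i ‖α i‖² • f i‖² = 1, then for all indices i, j with α i ≠ 0 and α j ≠ 0 one has f i = f j. -/
/-- For unit vectors `f i` and complex amplitudes `α i` with `∑ i, ‖α i‖² = 1`:
if `‖∑ i, ‖α i‖² • f i‖² = 1`, then `f i = f j` whenever `α i ≠ 0` and `α j ≠ 0`. -/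
theorem stmt_4 {E : Type*} [NormedAddCommGroup E] [InnerProductSpace ℂ E]
    (n : ℕ) (f : Fin n → E) (hf : ∀ i, ‖f i‖ = 1) (α : Fin n → ℂ)
    (hα : ∑ i, ‖α i‖ ^ 2 = 1)
    (hp : ‖∑ i, (‖α i‖ ^ 2 : ℝ) • f i‖ ^ 2 = 1) :
    ∀ i j, α i ≠ 0 → α j ≠ 0 → f i = f j := by
  letI : InnerProductSpace ℝ E := InnerProductSpace.rclikeToReal ℂ E
  intro i j hi hj
  set w : Fin n → ℝ := fun i => ‖α i‖ ^ 2 with hw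
  have hw0 : ∀ i, 0 ≤ w i := fun i => sq_nonneg _
  have hinner : ∑ i, ∑ j, w i * w j * (inner ℝ (f i) (f j) : ℝ) = 1 := by
    have h1 : (inner ℝ (∑ i, w i • f i) (∑ i, w i • f i) : ℝ) = 1 := by
      rw [real_inner_self_eq_norm_sq, hp]
    rw [← h1, sum_inner]
    refine Finset.sum_congr rfl fun i _ => ?_
    rw [inner_sum]
    refine Finset.sum_congr rfl fun j _ => ?_
    rw [real_inner_smul_left, real_inner_smul_right]
    ring
  have hkey : ∑ i, ∑ j, w i * w j * ‖f i - f j‖ ^ 2 = 0 := by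
    have : ∀ i j, w i * w j * ‖f i - f j‖ ^ 2
        = 2 * (w i * w j) - 2 * (w i * w j * (inner ℝ (f i) (f j) : ℝ)) := by
      intro i j
      have := norm_sub_sq_real (f i) (f j)
      rw [hf i, hf j] at this
      rw [this]; ring
    simp only [this, Finset.sum_sub_distrib, ← Finset.mul_sum]
    simp only [hα, mul_one]
    rw [hinner]; norm_num
  have hterm : w i * w j * ‖f i - f j‖ ^ 2 = 0 := by
    have h1 := (Finset.sum_eq_zero_iff_of_nonneg (fun i _ =>
      Finset.sum_nonneg fun j _ => mul_nonneg (mul_nonneg (hw0 i) (hw0 j)) (sq_nonneg _))).mp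
      hkey i (Finset.mem_univ i)
    exact (Finset.sum_eq_zero_iff_of_nonneg (fun j _ =>
      mul_nonneg (mul_nonneg (hw0 i) (hw0 j)) (sq_nonneg _))).mp h1 j (Finset.mem_univ j)
  have hwi : w i ≠ 0 := by simpa [hw, sq_eq_zero_iff, norm_eq_zero] using hi
  have hwj : w j ≠ 0 := by simpa [hw, sq_eq_zero_iff, norm_eq_zero] using hj
  have : ‖f i - f j‖ ^ 2 = 0 := by
    rcases mul_eq_zero.mp hterm with h | h
    · exact absurd (mul_eq_zero.mp h) (by tauto)
    · exact h
  have := pow_eq_zero_iff (n := 2) (by norm_num) |>.mp this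
  exact sub_eq_zero.mp (by rwa [norm_eq_zero] at this)
end

section
/- Fix a positive integer P, an angle θ ∈ ℝ, natural number t, r, l ∈ ZMod P, and coin state s ∈ {R, L}. On H = EuclideanSpace ℂ (ZMod P × Bool) with basis |x, c⟩, let U = S ∘ C(θ) be the quantum-walk step operator, where S|x,R⟩ = |x+1,R⟩, S|x,L⟩ = |x−1,L⟩, C(θ)|x,R⟩ = cos θ·|x,R⟩ − sin θ·|x,L⟩, C(θ)|x,L⟩ = sin θ·|x,R⟩ + cos θ·|x,L⟩, and let T_r|x,c⟩ = |x+r,c⟩. Then (U^t)⁻¹ applied to T_r (U^t |l, s⟩) equals |l + r, s⟩; in particular, Alice's position measurement on the decrypted state yields the outcome i₀ = l + r (mod P) with probability 1. -/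
/-- Correctness of key decryption in Protocol 1: inverting the walk on the translated
state `T_r (U^t |l,s⟩)` yields exactly the basis state `|l+r, s⟩`, so Alice's position
measurement gives the outcome `l + r (mod P)` with probability 1.
Coin `true` is `R`, `false` is `L`. -/
theorem stmt_7 (P : ℕ) [NeZero P] (θ : ℝ) (t : ℕ) (r l : ZMod P) (s : Bool)
    (S C T Uinv :
      EuclideanSpace ℂ (ZMod P × Bool) →ₗ[ℂ] EuclideanSpace ℂ (ZMod P × Bool))
    (hSR : ∀ x : ZMod P,
      S (EuclideanSpace.single (x, true) 1) = EuclideanSpace.single (x + 1, true) 1)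
    (hSL : ∀ x : ZMod P,
      S (EuclideanSpace.single (x, false) 1) = EuclideanSpace.single (x - 1, false) 1)
    (hCR : ∀ x : ZMod P,
      C (EuclideanSpace.single (x, true) 1) =
        (Real.cos θ : ℂ) • EuclideanSpace.single (x, true) 1
          - (Real.sin θ : ℂ) • EuclideanSpace.single (x, false) 1)
    (hCL : ∀ x : ZMod P,
      C (EuclideanSpace.single (x, false) 1) =
        (Real.sin θ : ℂ) • EuclideanSpace.single (x, true) 1
          + (Real.cos θ : ℂ) • EuclideanSpace.single (x, false) 1)
    (hT : ∀ (x : ZMod P) (c : Bool),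
      T (EuclideanSpace.single (x, c) 1) = EuclideanSpace.single (x + r, c) 1)
    (hUinv₁ : Uinv ∘ₗ (S ∘ₗ C) = LinearMap.id)
    (hUinv₂ : (S ∘ₗ C) ∘ₗ Uinv = LinearMap.id) :
    (Uinv ^ t) (T (((S ∘ₗ C) ^ t) (EuclideanSpace.single (l, s) 1))) =
        EuclideanSpace.single (l + r, s) 1 ∧
      ∑ c : Bool,
        ‖(Uinv ^ t) (T (((S ∘ₗ C) ^ t) (EuclideanSpace.single (l, s) 1))) (l + r, c)‖ ^ 2
          = 1 := by
  have key : (Uinv ^ t) (T (((S ∘ₗ C) ^ t) (EuclideanSpace.single (l, s) 1))) =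
      EuclideanSpace.single (l + r, s) 1 := by
    have hcomm : Commute T (S ∘ₗ C) := by
      show T * (S ∘ₗ C) = (S ∘ₗ C) * T
      have : T ∘ₗ (S ∘ₗ C) = (S ∘ₗ C) ∘ₗ T := by
        apply Module.Basis.ext (EuclideanSpace.basisFun (ZMod P × Bool) ℂ).toBasis
        rintro ⟨x, c⟩
        cases c <;>
          simp [OrthonormalBasis.coe_toBasis, EuclideanSpace.basisFun_apply, hCR, hCL, hSR, hSL, hT,
            map_sub, map_add, map_smul, add_right_comm, sub_add_eq_add_sub]
      exact this
    have hcommt : T ∘ₗ ((S ∘ₗ C) ^ t) = ((S ∘ₗ C) ^ t) ∘ₗ T := hcomm.pow_right t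
    have hinv : (Uinv ^ t) ∘ₗ ((S ∘ₗ C) ^ t) = LinearMap.id := by
      have hc : Commute Uinv (S ∘ₗ C) := by
        show Uinv * (S ∘ₗ C) = (S ∘ₗ C) * Uinv
        show Uinv ∘ₗ (S ∘ₗ C) = (S ∘ₗ C) ∘ₗ Uinv
        rw [hUinv₁, hUinv₂]
      have := (hc.mul_pow t).symm
      rw [show Uinv * (S ∘ₗ C) = (1 : _) from hUinv₁, one_pow] at this
      rw [← Module.End.mul_eq_comp, show (LinearMap.id : EuclideanSpace ℂ (ZMod P × Bool) →ₗ[ℂ] _) = 1 from rfl]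
      exact this
    calc (Uinv ^ t) (T (((S ∘ₗ C) ^ t) (EuclideanSpace.single (l, s) 1)))
        = (Uinv ^ t) ((T ∘ₗ ((S ∘ₗ C) ^ t)) (EuclideanSpace.single (l, s) 1)) := rfl
      _ = ((Uinv ^ t) ∘ₗ ((S ∘ₗ C) ^ t)) (T (EuclideanSpace.single (l, s) 1)) := by
          rw [hcommt]; rfl
      _ = T (EuclideanSpace.single (l, s) 1) := by rw [hinv]; rfl
      _ = EuclideanSpace.single (l + r, s) 1 := hT l s
  refine ⟨key, ?_⟩
  rw [key]
  cases s <;> simp [EuclideanSpace.single_apply, Fintype.sum_bool]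
end

section
/- Let P be a positive even integer and θ ∈ ℝ. On H = EuclideanSpace ℂ (ZMod P × Bool) with basis |x, c⟩ (x ∈ ZMod P, c ∈ {R, L}), let U = S ∘ C(θ) be the quantum-walk step operator, where S|x,R⟩ = |x+1,R⟩, S|x,L⟩ = |x−1,L⟩, C(θ)|x,R⟩ = cos θ·|x,R⟩ − sin θ·|x,L⟩, C(θ)|x,L⟩ = sin θ·|x,R⟩ + cos θ·|x,L⟩. Let π : ZMod P → ZMod 2 be the canonical ring homomorphism (which exists since 2 divides P). Then for every t ∈ ℕ, all positions x, l ∈ ZMod P and all coins c, s ∈ {R, L}: if π(x − l) ≠ (t : ZMod 2), then the amplitude ⟨x, c | U^t | l, s⟩ = 0. -/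
lemma euclid_decomp {ι : Type*} [Fintype ι] [DecidableEq ι] (v : EuclideanSpace ℂ ι) :
    v = ∑ i, v i • EuclideanSpace.single i 1 := by
  ext j
  rw [WithLp.ofLp_sum, Finset.sum_apply]
  simp [EuclideanSpace.single_apply]

/-- On a cycle with an even number `P` of nodes, the amplitudes of the quantum walk
`U = S ∘ C(θ)` after `t` steps, started from a basis state `|l, s⟩`, vanish on every
position `x` whose parity differs from that of `l + t`:
if `x - l ≢ t (mod 2)` then `⟨x, c| U^t |l, s⟩ = 0`.  Coin `true` is `R`, `false` is `L`. -/
theorem stmt_10 (P : ℕ) [NeZero P] (hP2 : 2 ∣ P) (θ : ℝ)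
    (S C : EuclideanSpace ℂ (ZMod P × Bool) →ₗ[ℂ] EuclideanSpace ℂ (ZMod P × Bool))
    (hSR : ∀ x : ZMod P,
      S (EuclideanSpace.single (x, true) 1) = EuclideanSpace.single (x + 1, true) 1)
    (hSL : ∀ x : ZMod P,
      S (EuclideanSpace.single (x, false) 1) = EuclideanSpace.single (x - 1, false) 1)
    (hCR : ∀ x : ZMod P,
      C (EuclideanSpace.single (x, true) 1) =
        (Real.cos θ : ℂ) • EuclideanSpace.single (x, true) 1
          - (Real.sin θ : ℂ) • EuclideanSpace.single (x, false) 1)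
    (hCL : ∀ x : ZMod P,
      C (EuclideanSpace.single (x, false) 1) =
        (Real.sin θ : ℂ) • EuclideanSpace.single (x, true) 1
          + (Real.cos θ : ℂ) • EuclideanSpace.single (x, false) 1)
    (t : ℕ) (x l : ZMod P) (c s : Bool)
    (hparity : ZMod.castHom hP2 (ZMod 2) (x - l) ≠ (t : ZMod 2)) :
    (((S ∘ₗ C) ^ t) (EuclideanSpace.single (l, s) 1)) (x, c) = 0 := by
  set π := ZMod.castHom hP2 (ZMod 2) with hπ
  -- key step lemma
  have step : ∀ (ψ : EuclideanSpace ℂ (ZMod P × Bool)) (p : ZMod 2),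
      (∀ y d, π y ≠ p → ψ (y, d) = 0) →
      ∀ y c, π y ≠ p + 1 → ((S ∘ₗ C) ψ) (y, c) = 0 := by
    intro ψ p hψ y c' hy
    have hdec := euclid_decomp ψ
    rw [hdec, map_sum]
    have : ∀ i ∈ Finset.univ, ((S ∘ₗ C) (ψ i • EuclideanSpace.single i 1)) (y, c') = 0 := by
      rintro ⟨z, d⟩ -
      by_cases hz : π z = p
      · have hy1 : y ≠ z + 1 := by
          rintro rfl; apply hy; simp [map_add, hz]
        have hy2 : y ≠ z - 1 := by
          rintro rfl; apply hy
          have h2 : (1 : ZMod 2) = -1 := by decide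
          rw [map_sub, hz, map_one, sub_eq_add_neg, ← h2]
        cases d <;>
          simp [map_smul, LinearMap.comp_apply, hCR, hCL, map_sub, map_add, map_smul,
            hSR, hSL, EuclideanSpace.single_apply, hy1, hy2, Prod.ext_iff]
      · have := hψ z d hz
        cases d <;> simp [this]
    rw [WithLp.ofLp_sum, Finset.sum_apply]
    exact Finset.sum_eq_zero this
  -- induction
  induction t generalizing x c with
  | zero =>
    have hx : x ≠ l := by rintro rfl; simp at hparity
    simp [EuclideanSpace.single_apply, Prod.ext_iff, hx]
  | succ n ih =>
    have h1 : ((S ∘ₗ C) ^ (n + 1)) (EuclideanSpace.single (l, s) 1)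
        = (S ∘ₗ C) (((S ∘ₗ C) ^ n) (EuclideanSpace.single (l, s) 1)) := by
      rw [pow_succ']; rfl
    rw [h1]
    apply step _ (π l + n) _ x c
    · intro hc
      apply hparity
      have : π x - π l = (n : ZMod 2) + 1 := by rw [hc]; ring
      rw [map_sub, this]; push_cast; ring
    · intro y d hyd
      apply ih y d
      intro hc
      apply hyd
      rw [map_sub] at hc
      linear_combination hc
end

section
/- Let P and t be natural numbers with 2t < P and let q ∈ ZMod P. On H = EuclideanSpace ℂ (ZMod P × Bool) with basis |x, c⟩, define the shift S' by S'|x,R⟩ = |x−1,R⟩ and S'|x,L⟩ = |x+1,L⟩, the Hadamard coin H_c by H_c|x,R⟩ = (1/√2)(|x,R⟩ + |x,L⟩) and H_c|x,L⟩ = (1/√2)(|x,R⟩ − |x,L⟩), and the walk step W = H_c ∘ S'. Then the extremal amplitudes after t steps satisfy ⟨q−t, R | W^t | q, R⟩ = (1/√2)^t and ⟨q+t, L | W^t | q, L⟩ = (−1/√2)^t; in particular both are nonzero. -/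
/-- Extremal amplitudes of the Hadamard walk `W = H_c ∘ S'` (shift before coin) on a
cycle of `P` nodes with `2t < P`: `⟨q-t, R| W^t |q, R⟩ = (1/√2)^t` and
`⟨q+t, L| W^t |q, L⟩ = (-1/√2)^t`; in particular both are nonzero.
Coin `true` is `R`, `false` is `L`. -/
theorem stmt_12 (P t : ℕ) [NeZero P] (ht : 2 * t < P) (q : ZMod P)
    (S' Hc : EuclideanSpace ℂ (ZMod P × Bool) →ₗ[ℂ] EuclideanSpace ℂ (ZMod P × Bool))
    (hSR : ∀ x : ZMod P,
      S' (EuclideanSpace.single (x, true) 1) = EuclideanSpace.single (x - 1, true) 1)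
    (hSL : ∀ x : ZMod P,
      S' (EuclideanSpace.single (x, false) 1) = EuclideanSpace.single (x + 1, false) 1)
    (hHR : ∀ x : ZMod P,
      Hc (EuclideanSpace.single (x, true) 1) =
        (1 / Real.sqrt 2 : ℂ) • (EuclideanSpace.single (x, true) 1
          + EuclideanSpace.single (x, false) 1))
    (hHL : ∀ x : ZMod P,
      Hc (EuclideanSpace.single (x, false) 1) =
        (1 / Real.sqrt 2 : ℂ) • (EuclideanSpace.single (x, true) 1
          - EuclideanSpace.single (x, false) 1)) :
    ((((Hc ∘ₗ S') ^ t) (EuclideanSpace.single (q, true) 1)) ((q - t, true))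
        = (1 / Real.sqrt 2 : ℂ) ^ t ∧
      (((Hc ∘ₗ S') ^ t) (EuclideanSpace.single (q, false) 1)) ((q + t, false))
        = (-(1 / Real.sqrt 2) : ℂ) ^ t) ∧
    ((((Hc ∘ₗ S') ^ t) (EuclideanSpace.single (q, true) 1)) ((q - t, true)) ≠ 0 ∧
      (((Hc ∘ₗ S') ^ t) (EuclideanSpace.single (q, false) 1)) ((q + t, false)) ≠ 0) := by
  set r : ℂ := (1 / Real.sqrt 2 : ℂ) with hrdef
  have hrne : r ≠ 0 := by
    rw [hrdef]
    simp only [ne_eq, div_eq_zero_iff, one_ne_zero, false_or, Complex.ofReal_eq_zero]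
    exact Real.sqrt_ne_zero'.2 (by norm_num)
  -- pointwise action of one walk step on arbitrary vectors
  have key : ∀ (ψ : EuclideanSpace ℂ (ZMod P × Bool)) (x : ZMod P),
      (Hc (S' ψ)) (x, true) = r * (ψ (x + 1, true) + ψ (x - 1, false)) ∧
      (Hc (S' ψ)) (x, false) = r * (ψ (x + 1, true) - ψ (x - 1, false)) := by
    intro ψ x
    have hψ : ψ = ∑ b : ZMod P × Bool, ψ b • EuclideanSpace.single b 1 := by
      ext i
      rw [WithLp.ofLp_sum, Finset.sum_apply]
      simp [EuclideanSpace.single_apply]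
    have hv : Hc (S' ψ) = ∑ b : ZMod P × Bool,
        ψ b • Hc (S' (EuclideanSpace.single b 1)) := by
      conv_lhs => rw [hψ]
      simp [map_sum]
    have h1 : ∀ y : ZMod P, (x = y - 1) = (y = x + 1) := by
      intro y; apply propext; constructor <;> intro h <;> subst h <;> ring
    have h2 : ∀ y : ZMod P, (x = y + 1) = (y = x - 1) := by
      intro y; apply propext; constructor <;> intro h <;> subst h <;> ring
    have hval : ∀ c : Bool, (Hc (S' ψ)) (x, c)
        = ∑ y : ZMod P,
          (ψ (y, true) * (r *
            ((if ((x,c) : ZMod P × Bool) = (y - 1, true) then 1 else 0)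
              + (if ((x,c) : ZMod P × Bool) = (y - 1, false) then 1 else 0)))
          + ψ (y, false) * (r *
            ((if ((x,c) : ZMod P × Bool) = (y + 1, true) then 1 else 0)
              - (if ((x,c) : ZMod P × Bool) = (y + 1, false) then 1 else 0)))) := by
      intro c
      rw [hv, WithLp.ofLp_sum, Finset.sum_apply, Fintype.sum_prod_type]
      congr 1; ext y
      rw [Fintype.sum_bool]
      rw [hSR y, hSL y, hHR, hHL]
      simp [EuclideanSpace.single_apply, mul_add, mul_sub, add_comm]
    constructor
    · rw [hval true,
        Finset.sum_congr rfl (fun y _ => show _ =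
          ((if y = x + 1 then r * ψ (y, true) else 0)
            + (if y = x - 1 then r * ψ (y, false) else 0)) from ?_),
        Finset.sum_add_distrib, Finset.sum_ite_eq', Finset.sum_ite_eq']
      · simp; ring
      · simp only [Prod.mk.injEq, Bool.true_eq_false, Bool.false_eq_true, and_true,
          and_false, false_and, if_false, add_zero, sub_zero, h1, h2]
        split_ifs <;> ring
    · rw [hval false,
        Finset.sum_congr rfl (fun y _ => show _ =
          ((if y = x + 1 then r * ψ (y, true) else 0)
            + (if y = x - 1 then -(r * ψ (y, false)) else 0)) from ?_),
        Finset.sum_add_distrib, Finset.sum_ite_eq', Finset.sum_ite_eq']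
      · simp; ring
      · simp only [Prod.mk.injEq, Bool.true_eq_false, Bool.false_eq_true, and_true,
          and_false, false_and, if_false, add_zero, sub_zero, zero_sub, h1, h2]
        split_ifs <;> ring
  -- the main induction
  have main : ∀ s : ℕ, s ≤ t →
      ((((Hc ∘ₗ S') ^ s) (EuclideanSpace.single (q, true) 1)) ((q - (s : ℕ), true)) = r ^ s ∧
       (((Hc ∘ₗ S') ^ s) (EuclideanSpace.single (q, false) 1)) ((q + (s : ℕ), false)) = (-r) ^ s) ∧
      (∀ (x : ZMod P) (c : Bool), (∀ j : ℤ, |j| ≤ (s : ℤ) → x ≠ q + (j : ZMod P)) →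
        (((Hc ∘ₗ S') ^ s) (EuclideanSpace.single (q, true) 1)) ((x, c)) = 0 ∧
        (((Hc ∘ₗ S') ^ s) (EuclideanSpace.single (q, false) 1)) ((x, c)) = 0) := by
    intro s
    induction s with
    | zero =>
      intro _
      refine ⟨⟨?_, ?_⟩, ?_⟩
      · simp [EuclideanSpace.single_apply]
      · simp [EuclideanSpace.single_apply]
      · intro x c hx
        have hxq : x ≠ q := by
          have := hx 0 (by simp)
          simpa using this
        constructor <;>
        · simp [EuclideanSpace.single_apply, Prod.ext_iff, hxq]
    | succ s ih =>
      intro hs1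
      obtain ⟨⟨hR, hL⟩, hsupp⟩ := ih (Nat.le_of_succ_le hs1)
      -- any small nonzero integer is nonzero mod P
      have cast_ne : ∀ d : ℤ, d ≠ 0 → |d| ≤ 2 * (s : ℤ) + 2 → ((d : ZMod P) ≠ 0) := by
        intro d hd hb hzero
        rw [ZMod.intCast_zmod_eq_zero_iff_dvd] at hzero
        have hPb : 2 * (s : ℤ) + 2 < P := by
          have h1 : (2 * t : ℤ) < P := by exact_mod_cast ht
          have h2 : (s : ℤ) + 1 ≤ t := by exact_mod_cast hs1
          omega
        exact hd (Int.eq_zero_of_abs_lt_dvd hzero (lt_of_le_of_lt hb hPb))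
      set ψR := ((Hc ∘ₗ S') ^ s) (EuclideanSpace.single (q, true) 1) with hψR
      set ψL := ((Hc ∘ₗ S') ^ s) (EuclideanSpace.single (q, false) 1) with hψL
      have hpowR : ((Hc ∘ₗ S') ^ (s + 1)) (EuclideanSpace.single (q, true) 1)
          = Hc (S' ψR) := by
        rw [pow_succ', Module.End.mul_apply, LinearMap.comp_apply, hψR]
      have hpowL : ((Hc ∘ₗ S') ^ (s + 1)) (EuclideanSpace.single (q, false) 1)
          = Hc (S' ψL) := by
        rw [pow_succ', Module.End.mul_apply, LinearMap.comp_apply, hψL]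
      refine ⟨⟨?_, ?_⟩, ?_⟩
      · -- extremal right-mover
        rw [hpowR, (key ψR (q - ((s + 1 : ℕ) : ZMod P))).1]
        have e1 : q - ((s + 1 : ℕ) : ZMod P) + 1 = q - (s : ℕ) := by push_cast; ring
        have e2 : q - ((s + 1 : ℕ) : ZMod P) - 1 = q + ((-(s : ℤ) - 2 : ℤ) : ZMod P) := by
          push_cast; ring
        have hzero : ψR (q + ((-(s : ℤ) - 2 : ℤ) : ZMod P), false) = 0 := by
          refine (hsupp _ false ?_).1
          intro j hj heq
          rw [abs_le] at hj
          push_cast at heq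
          have : ((-(s : ℤ) - 2 - j : ℤ) : ZMod P) = 0 := by
            push_cast
            linear_combination heq
          exact cast_ne _ (by omega) (by rw [abs_le]; omega) this
        rw [e1, e2, hR, hzero, add_zero, pow_succ]
        ring
      · -- extremal left-mover
        rw [hpowL, (key ψL (q + ((s + 1 : ℕ) : ZMod P))).2]
        have e1 : q + ((s + 1 : ℕ) : ZMod P) + 1 = q + (((s : ℤ) + 2 : ℤ) : ZMod P) := by
          push_cast; ring
        have e2 : q + ((s + 1 : ℕ) : ZMod P) - 1 = q + (s : ℕ) := by push_cast; ring
        have hzero : ψL (q + (((s : ℤ) + 2 : ℤ) : ZMod P), true) = 0 := by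
          refine (hsupp _ true ?_).2
          intro j hj heq
          rw [abs_le] at hj
          push_cast at heq
          have : (((s : ℤ) + 2 - j : ℤ) : ZMod P) = 0 := by
            push_cast
            linear_combination heq
          exact cast_ne _ (by omega) (by rw [abs_le]; omega) this
        rw [e1, e2, hzero, hL, zero_sub, pow_succ]
        ring
      · -- support
        intro x c hx
        have hx1 : ∀ j : ℤ, |j| ≤ (s : ℤ) → x + 1 ≠ q + (j : ZMod P) := by
          intro j hj heq
          refine hx (j - 1) (by rw [abs_le] at hj ⊢; push_cast; omega) ?_
          push_cast
          linear_combination heq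
        have hx2 : ∀ j : ℤ, |j| ≤ (s : ℤ) → x - 1 ≠ q + (j : ZMod P) := by
          intro j hj heq
          refine hx (j + 1) (by rw [abs_le] at hj ⊢; push_cast; omega) ?_
          push_cast
          linear_combination heq
        have hR0 : ψR (x + 1, true) = 0 := (hsupp _ true hx1).1
        have hRf : ψR (x - 1, false) = 0 := (hsupp _ false hx2).1
        have hL0 : ψL (x + 1, true) = 0 := (hsupp _ true hx1).2
        have hLf : ψL (x - 1, false) = 0 := (hsupp _ false hx2).2
        rw [hpowR, hpowL]
        cases c
        · rw [(key ψR x).2, (key ψL x).2, hR0, hRf, hL0, hLf]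
          constructor <;> ring
        · rw [(key ψR x).1, (key ψL x).1, hR0, hRf, hL0, hLf]
          constructor <;> ring
  obtain ⟨⟨h1, h2⟩, _⟩ := main t le_rfl
  refine ⟨⟨h1, h2⟩, ?_, ?_⟩
  · rw [h1]; exact pow_ne_zero _ hrne
  · rw [h2]; exact pow_ne_zero _ (neg_ne_zero.2 hrne)
end

section
/- Let P be an odd positive integer. On H = EuclideanSpace ℂ (ZMod P × Bool) with basis |x, c⟩, define the shift S' by S'|x,R⟩ = |x−1,R⟩ and S'|x,L⟩ = |x+1,L⟩, the Hadamard coin H_c by H_c|x,R⟩ = (1/√2)(|x,R⟩ + |x,L⟩) and H_c|x,L⟩ = (1/√2)(|x,R⟩ − |x,L⟩), and the walk step W = H_c ∘ S'. Then for every two position-coin pairs (l, s) and (l', s') in ZMod P × {R, L}, there exist a natural number T ≥ 1 and an initial basis state |l₀, s₀⟩ such that ⟨l, s | W^T | l₀, s₀⟩ ≠ 0 and ⟨l', s' | W^T | l₀, s₀⟩ ≠ 0. -/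
namespace Stmt13Aux

variable {P : ℕ} [NeZero P]


lemma sum_apply' (w : (ZMod P × Bool) → EuclideanSpace ℂ (ZMod P × Bool))
    (j : ZMod P × Bool) : (∑ i : ZMod P × Bool, w i) j = ∑ i : ZMod P × Bool, w i j :=
  by rw [WithLp.ofLp_sum]; exact Finset.sum_apply j Finset.univ _

lemma repr' (v : EuclideanSpace ℂ (ZMod P × Bool)) :
    v = ∑ i : ZMod P × Bool, v i • EuclideanSpace.single i (1:ℂ) := by
  have := (EuclideanSpace.basisFun (ZMod P × Bool) ℂ).sum_repr v
  simp only [EuclideanSpace.basisFun_repr, EuclideanSpace.basisFun_apply] at this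
  exact this.symm

lemma step (S' Hc : EuclideanSpace ℂ (ZMod P × Bool) →ₗ[ℂ] EuclideanSpace ℂ (ZMod P × Bool))
    (hSR : ∀ x : ZMod P,
      S' (EuclideanSpace.single (x, true) 1) = EuclideanSpace.single (x - 1, true) 1)
    (hSL : ∀ x : ZMod P,
      S' (EuclideanSpace.single (x, false) 1) = EuclideanSpace.single (x + 1, false) 1)
    (hHR : ∀ x : ZMod P,
      Hc (EuclideanSpace.single (x, true) 1) =
        (1 / Real.sqrt 2 : ℂ) • (EuclideanSpace.single (x, true) 1
          + EuclideanSpace.single (x, false) 1))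
    (hHL : ∀ x : ZMod P,
      Hc (EuclideanSpace.single (x, false) 1) =
        (1 / Real.sqrt 2 : ℂ) • (EuclideanSpace.single (x, true) 1
          - EuclideanSpace.single (x, false) 1))
    (v : EuclideanSpace ℂ (ZMod P × Bool)) (y : ZMod P) (c : Bool) :
    (Hc (S' v)) (y, c) = (1 / Real.sqrt 2 : ℂ) *
      (v (y+1, true) + (if c then 1 else -1) * v (y-1, false)) := by
  have hv : Hc (S' v) = ∑ i : ZMod P × Bool, v i • Hc (S' (EuclideanSpace.single i 1)) := by
    conv_lhs => rw [repr' v]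
    rw [map_sum, map_sum]
    simp
  rw [hv, sum_apply']
  have key : ∀ i : ZMod P × Bool, (v i • Hc (S' (EuclideanSpace.single i 1))) (y, c)
      = (if i = (y+1, true) then (1 / Real.sqrt 2 : ℂ) * v (y+1, true)
         else if i = (y-1, false) then
           (1 / Real.sqrt 2 : ℂ) * ((if c then 1 else -1) * v (y-1, false)) else 0) := by
    rintro ⟨x, b⟩
    cases b
    · rw [hSL x, hHL (x+1)]
      rcases eq_or_ne x (y - 1) with hx | hx
      · subst hx
        simp [EuclideanSpace.single_apply, Prod.ext_iff, sub_add_cancel]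
        cases c <;> simp <;> ring
      · have h1 : (x, false) ≠ (y+1, true) := by simp
        have h2 : (x, false) ≠ (y-1, false) := by simp [hx]
        rw [if_neg h1, if_neg h2]
        have hy : y ≠ x + 1 := fun h => hx (by rw [h]; ring)
        simp [EuclideanSpace.single_apply, Prod.ext_iff, hy]
    · rw [hSR x, hHR (x-1)]
      rcases eq_or_ne x (y + 1) with hx | hx
      · subst hx
        simp [EuclideanSpace.single_apply, Prod.ext_iff, add_sub_cancel_right]
        cases c <;> simp <;> ring
      · have h1 : (x, true) ≠ (y+1, true) := by simp [hx]
        rw [if_neg h1, if_neg (by simp)]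
        have hy : y ≠ x - 1 := fun h => hx (by rw [h]; ring)
        simp [EuclideanSpace.single_apply, Prod.ext_iff, hy]
  rw [Finset.sum_congr rfl fun i _ => key i]
  have split : ∀ i : ZMod P × Bool,
      (if i = (y + 1, true) then (1 / Real.sqrt 2 : ℂ) * v (y + 1, true)
       else if i = (y - 1, false) then
         (1 / Real.sqrt 2 : ℂ) * ((if c then 1 else -1) * v (y - 1, false)) else 0)
      = (if i = (y + 1, true) then (1 / Real.sqrt 2 : ℂ) * v (y + 1, true) else 0)
        + (if i = (y - 1, false) then
            (1 / Real.sqrt 2 : ℂ) * ((if c then 1 else -1) * v (y - 1, false)) else 0) := by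
    intro i
    rcases eq_or_ne i (y + 1, true) with h | h
    · subst h
      rw [if_pos rfl, if_pos rfl, if_neg (by simp), add_zero]
    · rw [if_neg h, if_neg h, zero_add]
  rw [Finset.sum_congr rfl fun i _ => split i, Finset.sum_add_distrib,
    Finset.sum_ite_eq' Finset.univ, Finset.sum_ite_eq' Finset.univ,
    if_pos (Finset.mem_univ _), if_pos (Finset.mem_univ _)]
  ring



lemma two_mul_ne (hPodd : Odd P) {m : ℕ} (h0 : 0 < m) (h : m < P) :
    ((2 * m : ℕ) : ZMod P) ≠ 0 := by
  intro h2
  have hd : P ∣ 2 * m := (ZMod.natCast_eq_zero_iff _ P).mp h2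
  have hc : Nat.Coprime P 2 := Nat.coprime_two_right.mpr hPodd
  have : P ∣ m := (Nat.Coprime.dvd_of_dvd_mul_left hc hd)
  exact absurd (Nat.le_of_dvd h0 this) (by omega)

lemma walk_inv (hPodd : Odd P)
    (S' Hc : EuclideanSpace ℂ (ZMod P × Bool) →ₗ[ℂ] EuclideanSpace ℂ (ZMod P × Bool))
    (hstep : ∀ (v : EuclideanSpace ℂ (ZMod P × Bool)) (y : ZMod P) (c : Bool),
      (Hc (S' v)) (y, c) = (1 / Real.sqrt 2 : ℂ) *
        (v (y+1, true) + (if c then 1 else -1) * v (y-1, false)))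
    (x₀ : ZMod P) :
    ∀ T : ℕ, 1 ≤ T → T ≤ P →
    (∀ y : ZMod P, ∀ c : Bool, (∀ j : ℕ, j < T → y ≠ x₀ - (T : ZMod P) + 2 * (j : ZMod P)) →
      (((Hc ∘ₗ S') ^ T) (EuclideanSpace.single (x₀, true) (1:ℂ))) (y, c) = 0) ∧
    (∀ c : Bool, (((Hc ∘ₗ S') ^ T) (EuclideanSpace.single (x₀, true) (1:ℂ)))
        (x₀ - (T : ZMod P), c) = (1 / Real.sqrt 2 : ℂ) ^ T) ∧
    ((((Hc ∘ₗ S') ^ T) (EuclideanSpace.single (x₀, true) (1:ℂ)))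
        (x₀ + (T : ZMod P) - 2, false) = (-1) ^ (T+1) * (1 / Real.sqrt 2 : ℂ) ^ T) ∧
    (2 ≤ T → (((Hc ∘ₗ S') ^ T) (EuclideanSpace.single (x₀, true) (1:ℂ)))
        (x₀ + (T : ZMod P) - 2, true) = (-1) ^ T * (1 / Real.sqrt 2 : ℂ) ^ T) := by
  intro T
  induction T with
  | zero => intro h; omega
  | succ T ih =>
    intro _ hTP
    set W := Hc ∘ₗ S' with hW
    have hpow : ∀ (v : EuclideanSpace ℂ (ZMod P × Bool)) (n : ℕ),
        (W ^ (n+1)) v = Hc (S' ((W ^ n) v)) := by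
      intro v n
      rw [pow_succ']
      rfl
    rcases Nat.eq_or_lt_of_le (Nat.one_le_iff_ne_zero.mpr (Nat.succ_ne_zero T)) with h1 | h1
    · -- base case T+1 = 1, i.e. T = 0
      have hT0 : T = 0 := by omega
      subst hT0
      have hval : ∀ (y : ZMod P) (c : Bool),
          ((W ^ 1) (EuclideanSpace.single (x₀, true) (1:ℂ))) (y, c)
          = (1 / Real.sqrt 2 : ℂ) * (if (y + 1 : ZMod P) = x₀ then 1 else 0) := by
        intro y c
        rw [hpow, pow_zero, Module.End.one_apply, hstep]
        cases c <;> simp [EuclideanSpace.single_apply, Prod.ext_iff]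
      refine ⟨?_, ?_, ?_, by omega⟩
      · intro y c hy
        have hy0 := hy 0 (by norm_num)
        push_cast at hy0
        have hne : (y + 1 : ZMod P) ≠ x₀ := by
          intro h
          exact hy0 (by rw [← h]; ring)
        rw [hval, if_neg hne, mul_zero]
      · intro c
        rw [hval, if_pos (by push_cast; ring)]
        push_cast; ring
      · rw [hval, if_pos (by push_cast; ring)]
        push_cast; ring
    · -- inductive step: T ≥ 1
      have hT1 : 1 ≤ T := by omega
      have hTP' : T ≤ P := by omega
      have hTltP : T < P := by omega
      obtain ⟨hsupp, hlow, hhighf, hhight⟩ := ih hT1 hTP'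
      set ψ : EuclideanSpace ℂ (ZMod P × Bool) :=
        (W ^ T) (EuclideanSpace.single (x₀, true) (1:ℂ)) with hψ
      have hval : ∀ (y : ZMod P) (c : Bool),
          ((W ^ (T+1)) (EuclideanSpace.single (x₀, true) (1:ℂ))) (y, c)
          = (1 / Real.sqrt 2 : ℂ) *
            (ψ (y+1, true) + (if c then 1 else -1) * ψ (y-1, false)) := by
        intro y c
        rw [hpow, hstep]
      -- key vanishing facts
      have hvanish : ∀ (y : ZMod P) (c : Bool),
          (∀ j : ℕ, j < T → y ≠ x₀ - (T : ZMod P) + 2 * (j : ZMod P)) → ψ (y, c) = 0 :=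
        hsupp
      have hlow0 : ψ (x₀ - ((T:ℕ)+1 : ℕ) - 1, false) = 0 := by
        apply hvanish
        intro j hj heq
        have h2 : ((2 * (j+1) : ℕ) : ZMod P) = 0 := by
          push_cast at heq ⊢
          linear_combination -heq
        exact two_mul_ne hPodd (by omega) (by omega) h2
      have hhigh0 : ψ (x₀ + (T : ZMod P), true) = 0 := by
        apply hvanish
        intro j hj heq
        have h2 : ((2 * (T - j) : ℕ) : ZMod P) = 0 := by
          have : (T - j : ℕ) = T - j := rfl
          push_cast [Nat.cast_sub (le_of_lt hj)] at heq ⊢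
          linear_combination heq
        exact two_mul_ne hPodd (by omega) (by omega) h2
      refine ⟨?_, ?_, ?_, ?_⟩
      · -- support
        intro y c hy
        rw [hval]
        have h1 : ψ (y+1, true) = 0 := by
          apply hvanish
          intro j hj heq
          refine hy j (by omega) ?_
          push_cast at heq ⊢
          linear_combination heq
        have h2 : ψ (y-1, false) = 0 := by
          apply hvanish
          intro j hj heq
          refine hy (j+1) (by omega) ?_
          push_cast at heq ⊢
          linear_combination heq
        rw [h1, h2, mul_zero, add_zero, mul_zero]
      · -- low corner
        intro c
        have e1 : (x₀ - ((T:ℕ)+1 : ℕ) + 1 : ZMod P) = x₀ - (T : ZMod P) := by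
          push_cast; ring
        rw [hval, e1, hlow true, hlow0]
        cases c <;> push_cast <;> ring
      · -- high corner, coin false
        have e1 : (x₀ + ((T:ℕ)+1 : ℕ) - 2 + 1 : ZMod P) = x₀ + (T : ZMod P) := by
          push_cast; ring
        have e2 : (x₀ + ((T:ℕ)+1 : ℕ) - 2 - 1 : ZMod P) = x₀ + (T : ZMod P) - 2 := by
          push_cast; ring
        rw [hval, e1, e2, hhigh0, hhighf]
        push_cast; ring
      · -- high corner, coin true
        intro _
        have e1 : (x₀ + ((T:ℕ)+1 : ℕ) - 2 + 1 : ZMod P) = x₀ + (T : ZMod P) := by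
          push_cast; ring
        have e2 : (x₀ + ((T:ℕ)+1 : ℕ) - 2 - 1 : ZMod P) = x₀ + (T : ZMod P) - 2 := by
          push_cast; ring
        rw [hval, e1, e2, hhigh0, hhighf]
        simp only [if_true]
        push_cast; ring


end Stmt13Aux

/-- For the Hadamard walk `W = H_c ∘ S'` (shift before coin) on a cycle with an odd
number `P` of nodes: for any two position-coin pairs `(l, s)` and `(l', s')` there are
a number of steps `T ≥ 1` and an initial basis state `|l₀, s₀⟩` such that `W^T |l₀, s₀⟩`
has nonzero amplitude on both `|l, s⟩` and `|l', s'⟩`.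
Coin `true` is `R`, `false` is `L`. -/
theorem stmt_13 (P : ℕ) [NeZero P] (hPodd : Odd P)
    (S' Hc : EuclideanSpace ℂ (ZMod P × Bool) →ₗ[ℂ] EuclideanSpace ℂ (ZMod P × Bool))
    (hSR : ∀ x : ZMod P,
      S' (EuclideanSpace.single (x, true) 1) = EuclideanSpace.single (x - 1, true) 1)
    (hSL : ∀ x : ZMod P,
      S' (EuclideanSpace.single (x, false) 1) = EuclideanSpace.single (x + 1, false) 1)
    (hHR : ∀ x : ZMod P,
      Hc (EuclideanSpace.single (x, true) 1) =
        (1 / Real.sqrt 2 : ℂ) • (EuclideanSpace.single (x, true) 1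
          + EuclideanSpace.single (x, false) 1))
    (hHL : ∀ x : ZMod P,
      Hc (EuclideanSpace.single (x, false) 1) =
        (1 / Real.sqrt 2 : ℂ) • (EuclideanSpace.single (x, true) 1
          - EuclideanSpace.single (x, false) 1))
    (l l' : ZMod P) (s s' : Bool) :
    ∃ (T : ℕ) (l₀ : ZMod P) (s₀ : Bool), 1 ≤ T ∧
      (((Hc ∘ₗ S') ^ T) (EuclideanSpace.single (l₀, s₀) 1)) ((l, s)) ≠ 0 ∧
      (((Hc ∘ₗ S') ^ T) (EuclideanSpace.single (l₀, s₀) 1)) ((l', s')) ≠ 0 := by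
  classical
  have hstep := Stmt13Aux.step S' Hc hSR hSL hHR hHL
  have h2u : IsUnit (2 : ZMod P) := by
    have := (ZMod.isUnit_iff_coprime 2 P).mpr (Nat.coprime_two_left.mpr hPodd)
    simpa using this
  set u : ZMod P := (l' - l + 2) * (2 : ZMod P)⁻¹ with hu
  set t : ℕ := u.val with ht
  set T : ℕ := if t = 0 then P else t with hT
  have hPpos : 0 < P := Nat.pos_of_ne_zero (NeZero.ne P)
  have hT1 : 1 ≤ T := by
    rw [hT]; split <;> omega
  have hTP : T ≤ P := by
    have := ZMod.val_lt u
    rw [hT]; split <;> omega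
  have hcast : ((T : ℕ) : ZMod P) = u := by
    by_cases h : t = 0
    · have hu0 : u = 0 := by
        have := (ZMod.val_eq_zero u).mp h
        exact this
      simp [hT, h, hu0, ZMod.natCast_self]
    · rw [hT, if_neg h, ht]
      exact (ZMod.natCast_val u).trans (by simp)
  have h2T : (2 : ZMod P) * (T : ZMod P) = l' - l + 2 := by
    rw [hcast, hu]
    calc (2 : ZMod P) * ((l' - l + 2) * (2 : ZMod P)⁻¹)
        = (l' - l + 2) * ((2 : ZMod P)⁻¹ * 2) := by ring
      _ = l' - l + 2 := by rw [ZMod.inv_mul_of_unit _ h2u, mul_one]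
  set x₀ : ZMod P := l + (T : ZMod P) with hx₀
  obtain ⟨hsupp, hlow, hhighf, hhight⟩ :=
    Stmt13Aux.walk_inv hPodd S' Hc hstep x₀ T hT1 hTP
  have hx0low : x₀ - (T : ZMod P) = l := by rw [hx₀]; ring
  have hx0high : x₀ + (T : ZMod P) - 2 = l' := by
    rw [hx₀]
    linear_combination h2T
  have hs2 : Real.sqrt 2 ≠ 0 := (Real.sqrt_pos.mpr (by norm_num)).ne'
  have ha : (1 / Real.sqrt 2 : ℂ) ≠ 0 := by
    apply one_div_ne_zero
    exact_mod_cast hs2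
  have haT : (1 / Real.sqrt 2 : ℂ) ^ T ≠ 0 := pow_ne_zero _ ha
  have hm1 : ∀ k : ℕ, ((-1 : ℂ) ^ k * (1 / Real.sqrt 2 : ℂ) ^ T) ≠ 0 := fun k =>
    mul_ne_zero (pow_ne_zero _ (neg_ne_zero.mpr one_ne_zero)) haT
  by_cases hT2 : 2 ≤ T
  · refine ⟨T, x₀, true, hT1, ?_, ?_⟩
    · rw [← hx0low, hlow s]
      exact haT
    · rw [← hx0high]
      cases s'
      · rw [hhighf]; exact hm1 _
      · rw [hhight hT2]; exact hm1 _
  · have hTeq : T = 1 := by omega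
    have hll : l' = l := by
      have h1 := h2T
      rw [hTeq] at h1
      push_cast at h1
      linear_combination -h1
    refine ⟨T, x₀, true, hT1, ?_, ?_⟩
    · rw [← hx0low, hlow s]
      exact haT
    · rw [hll, ← hx0low, hlow s']
      exact haT
end
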